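/- arXiv:math/0610106 — 3 statements merged into one kernel-verified Lean document; each statement's English description precedes it below -/
import Mathlib

section
/- For the *-general model with good boundary conditions: if V ⊆ Λ are finite subsets of ℤ^d, then gap(ℒ_Λ) ≤ gap(ℒ_V). -/
open Set ENNReal

namespace KCSM

abbrev Site (d : ℕ) := Fin d → ℤ

/-- The *-oriented neighbourhood `K*_x = {x + Σ αᵢ eᵢ : αᵢ ∈ {0,1}, not all 0}`. -/
def Kstar {d : ℕ} (x : Site d) : Set (Site d) :=
  {y | y ≠ x ∧ ∀ i, y i = x i ∨ y i = x i + 1}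

variable {d : ℕ} {S : Type}

/-- Product weight of a configuration on `Λ`. -/
def weight [Fintype S] (ν : S → ℝ) (Λ : Finset (Site d)) (σ : ↥Λ → S) : ℝ :=
  ∏ x : ↥Λ, ν (σ x)

/-- Mean of `f` under the product measure `ν^{⊗Λ}`. -/
def mean [Fintype S] (ν : S → ℝ) (Λ : Finset (Site d)) (f : (↥Λ → S) → ℝ) : ℝ :=
  ∑ σ : ↥Λ → S, weight ν Λ σ * f σ

/-- Variance of `f` under the product measure `ν^{⊗Λ}`. -/
def varTot [Fintype S] (ν : S → ℝ) (Λ : Finset (Site d)) (f : (↥Λ → S) → ℝ) : ℝ :=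
  mean ν Λ (fun σ => f σ ^ 2) - (mean ν Λ f) ^ 2

/-- The local variance `Var_x(f)(σ)`: variance under `ν` of `s ↦ f(σ^{x←s})`. -/
def varAt [Fintype S] (ν : S → ℝ) (Λ : Finset (Site d)) (x : ↥Λ)
    (f : (↥Λ → S) → ℝ) (σ : ↥Λ → S) : ℝ :=
  (∑ s : S, ν s * f (Function.update σ x s) ^ 2) -
    (∑ s : S, ν s * f (Function.update σ x s)) ^ 2

/-- The constraint of the *-general model with good boundary conditions:
every site of `K*_x` lying inside `Λ` is in the good set `G`. -/
def starConstr (G : Set S) (Λ : Finset (Site d)) (x : ↥Λ) (σ : ↥Λ → S) : Prop :=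
  ∀ y : ↥Λ, (y : Site d) ∈ Kstar (x : Site d) → σ y ∈ G

open Classical in
/-- Dirichlet form of the *-general model on `Λ` with good boundary conditions. -/
noncomputable def starDirichlet [Fintype S] (ν : S → ℝ) (G : Set S)
    (Λ : Finset (Site d)) (f : (↥Λ → S) → ℝ) : ℝ :=
  ∑ x : ↥Λ, ∑ σ : ↥Λ → S,
    weight ν Λ σ * (if starConstr G Λ x σ then varAt ν Λ x f σ else 0)

/-- Spectral gap of the *-general model on `Λ` with good boundary conditions:
infimum of `D_Λ(f)/Var(f)` over nonconstant `f`. -/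
noncomputable def starGap [Fintype S] (ν : S → ℝ) (G : Set S)
    (Λ : Finset (Site d)) : ℝ≥0∞ :=
  ⨅ f : {f : (↥Λ → S) → ℝ // ∃ σ σ', f σ ≠ f σ'},
    ENNReal.ofReal (starDirichlet ν G Λ f.1) / ENNReal.ofReal (varTot ν Λ f.1)

/-! ### Auxiliary material -/

section Aux

open Classical

variable [Fintype S] {V Λ : Finset (Site d)}
set_option linter.unusedSectionVars false

/-- Inclusion of `↥V` into `↥Λ`. -/
def incl (hVΛ : V ⊆ Λ) (y : ↥V) : ↥Λ := ⟨↑y, hVΛ y.2⟩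

/-- Restriction of a configuration on `Λ` to `V`. -/
def restr (hVΛ : V ⊆ Λ) (σ : ↥Λ → S) (y : ↥V) : S := σ (incl hVΛ y)

/-- Sites of `Λ` inside `V` are equivalent to `↥V`. -/
def subEquiv (hVΛ : V ⊆ Λ) : {x : ↥Λ // (x : Site d) ∈ V} ≃ ↥V where
  toFun a := ⟨(a.1 : Site d), a.2⟩
  invFun y := ⟨incl hVΛ y, y.2⟩
  left_inv a := rfl
  right_inv y := rfl

/-- Configurations on `Λ` split as configurations over `V` and over `Λ \ V`. -/
noncomputable def cfgEquiv (hVΛ : V ⊆ Λ) :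
    (↥Λ → S) ≃ (↥V → S) × ({x : ↥Λ // (x : Site d) ∉ V} → S) where
  toFun σ := (restr hVΛ σ, fun b => σ b.1)
  invFun p x := if h : (x : Site d) ∈ V then p.1 ⟨↑x, h⟩ else p.2 ⟨x, h⟩
  left_inv σ := by
    funext x
    by_cases h : (x : Site d) ∈ V
    · simp only [dif_pos h]; rfl
    · simp only [dif_neg h]
  right_inv p := by
    refine Prod.ext ?_ ?_
    · funext y
      exact dif_pos y.2
    · funext b
      exact dif_neg b.2

lemma restr_cfgEquiv_symm (hVΛ : V ⊆ Λ) (τ : ↥V → S)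
    (ρ : {x : ↥Λ // (x : Site d) ∉ V} → S) :
    restr hVΛ ((cfgEquiv hVΛ).symm (τ, ρ)) = τ :=
  congrArg Prod.fst ((cfgEquiv hVΛ).apply_symm_apply (τ, ρ))

lemma cfgEquiv_symm_bad (hVΛ : V ⊆ Λ) (τ : ↥V → S)
    (ρ : {x : ↥Λ // (x : Site d) ∉ V} → S) (b : {x : ↥Λ // (x : Site d) ∉ V}) :
    (cfgEquiv hVΛ).symm (τ, ρ) b.1 = ρ b := by
  exact dif_neg b.2

lemma weight_split (hVΛ : V ⊆ Λ) (ν : S → ℝ) (σ : ↥Λ → S) :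
    weight ν Λ σ
      = weight ν V (restr hVΛ σ) * ∏ b : {x : ↥Λ // (x : Site d) ∉ V}, ν (σ b.1) := by
  rw [weight, weight,
    ← Fintype.prod_subtype_mul_prod_subtype (fun x : ↥Λ => (x : Site d) ∈ V)
      (fun x => ν (σ x))]
  congr 1
  exact Fintype.prod_equiv (subEquiv hVΛ) _ _ (fun a => rfl)

lemma sum_restr (hVΛ : V ⊆ Λ) (ν : S → ℝ) (hsum : ∑ s : S, ν s = 1)
    (g : (↥V → S) → ℝ) :
    ∑ σ : ↥Λ → S, weight ν Λ σ * g (restr hVΛ σ)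
      = ∑ τ : ↥V → S, weight ν V τ * g τ := by
  rw [← Equiv.sum_comp (cfgEquiv hVΛ).symm
    (fun σ => weight ν Λ σ * g (restr hVΛ σ)), Fintype.sum_prod_type]
  have hρ : ∑ ρ : {x : ↥Λ // (x : Site d) ∉ V} → S, ∏ b, ν (ρ b) = 1 := by
    rw [← Fintype.prod_sum (fun (_ : {x : ↥Λ // (x : Site d) ∉ V}) (s : S) => ν s)]
    simp [hsum]
  refine Finset.sum_congr rfl fun τ _ => ?_
  have : ∀ ρ : {x : ↥Λ // (x : Site d) ∉ V} → S,
      weight ν Λ ((cfgEquiv hVΛ).symm (τ, ρ)) * g (restr hVΛ ((cfgEquiv hVΛ).symm (τ, ρ)))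
        = (weight ν V τ * g τ) * ∏ b, ν (ρ b) := by
    intro ρ
    rw [weight_split hVΛ, restr_cfgEquiv_symm]
    have : ∀ b, ν (((cfgEquiv hVΛ).symm (τ, ρ)) b.1) = ν (ρ b) := fun b => by
      rw [cfgEquiv_symm_bad]
    rw [Finset.prod_congr rfl (fun b _ => this b)]
    ring
  rw [Finset.sum_congr rfl (fun ρ _ => this ρ), ← Finset.mul_sum, hρ, mul_one]

lemma varTot_restr (hVΛ : V ⊆ Λ) (ν : S → ℝ) (hsum : ∑ s : S, ν s = 1)
    (f : (↥V → S) → ℝ) :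
    varTot ν Λ (fun σ => f (restr hVΛ σ)) = varTot ν V f := by
  rw [varTot, varTot, mean, mean, mean, mean,
    sum_restr hVΛ ν hsum (fun τ => f τ ^ 2), sum_restr hVΛ ν hsum f]

lemma weight_pos (ν : S → ℝ) (hν : ∀ s, 0 < ν s) (σ : ↥Λ → S) :
    0 < weight ν Λ σ :=
  Finset.prod_pos fun _ _ => hν _

lemma varAt_nonneg (ν : S → ℝ) (hν : ∀ s, 0 < ν s) (hsum : ∑ s : S, ν s = 1)
    (x : ↥Λ) (f : (↥Λ → S) → ℝ) (σ : ↥Λ → S) : 0 ≤ varAt ν Λ x f σ := by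
  rw [varAt, sub_nonneg]
  set a : S → ℝ := fun s => f (Function.update σ x s) with ha
  calc (∑ s : S, ν s * a s) ^ 2
      = (∑ s : S, Real.sqrt (ν s) * (Real.sqrt (ν s) * a s)) ^ 2 := by
        congr 1; refine Finset.sum_congr rfl fun s _ => ?_
        rw [← mul_assoc, Real.mul_self_sqrt (hν s).le]
    _ ≤ (∑ s : S, Real.sqrt (ν s) ^ 2) * ∑ s : S, (Real.sqrt (ν s) * a s) ^ 2 :=
        Finset.sum_mul_sq_le_sq_mul_sq _ _ _
    _ = ∑ s : S, ν s * a s ^ 2 := by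
        have h1 : ∀ s : S, Real.sqrt (ν s) ^ 2 = ν s := fun s => Real.sq_sqrt (hν s).le
        rw [Finset.sum_congr rfl (fun s _ => h1 s), hsum, one_mul]
        refine Finset.sum_congr rfl fun s _ => ?_
        rw [mul_pow, h1 s]

lemma restr_update_notMem (hVΛ : V ⊆ Λ) (σ : ↥Λ → S) (x : ↥Λ)
    (hx : (x : Site d) ∉ V) (s : S) :
    restr hVΛ (Function.update σ x s) = restr hVΛ σ := by
  funext y
  have hne : incl hVΛ y ≠ x := fun h => hx (by rw [← h]; exact y.2)
  rw [restr, Function.update_of_ne hne]; rfl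

lemma restr_update_incl (hVΛ : V ⊆ Λ) (σ : ↥Λ → S) (y : ↥V) (s : S) :
    restr hVΛ (Function.update σ (incl hVΛ y) s) = Function.update (restr hVΛ σ) y s := by
  funext z
  by_cases hz : z = y
  · subst hz; simp [restr]
  · have hne : incl hVΛ z ≠ incl hVΛ y := fun h => hz (Subtype.ext (congrArg (fun w : ↥Λ => (w : Site d)) h))
    rw [restr, Function.update_of_ne hne, Function.update_of_ne hz]; rfl

lemma varAt_restr_notMem (hVΛ : V ⊆ Λ) (ν : S → ℝ) (hsum : ∑ s : S, ν s = 1)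
    (f : (↥V → S) → ℝ) (σ : ↥Λ → S) (x : ↥Λ) (hx : (x : Site d) ∉ V) :
    varAt ν Λ x (fun σ => f (restr hVΛ σ)) σ = 0 := by
  simp only [varAt, restr_update_notMem hVΛ σ x hx, ← Finset.sum_mul, hsum, one_mul]
  ring

lemma varAt_restr_incl (hVΛ : V ⊆ Λ) (ν : S → ℝ) (f : (↥V → S) → ℝ)
    (σ : ↥Λ → S) (y : ↥V) :
    varAt ν Λ (incl hVΛ y) (fun σ => f (restr hVΛ σ)) σ = varAt ν V y f (restr hVΛ σ) := by
  simp only [varAt, restr_update_incl hVΛ σ y]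

lemma starConstr_restr (hVΛ : V ⊆ Λ) (G : Set S) (y : ↥V) (σ : ↥Λ → S)
    (h : starConstr G Λ (incl hVΛ y) σ) : starConstr G V y (restr hVΛ σ) :=
  fun z hz => h (incl hVΛ z) hz

lemma starDirichlet_restr_le (hVΛ : V ⊆ Λ) (ν : S → ℝ) (hν : ∀ s, 0 < ν s)
    (hsum : ∑ s : S, ν s = 1) (G : Set S) (f : (↥V → S) → ℝ) :
    starDirichlet ν G Λ (fun σ => f (restr hVΛ σ)) ≤ starDirichlet ν G V f := by
  rw [starDirichlet, starDirichlet,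
    ← Fintype.sum_subtype_add_sum_subtype (fun x : ↥Λ => (x : Site d) ∈ V)
      (fun x => ∑ σ : ↥Λ → S, weight ν Λ σ *
        (if starConstr G Λ x σ then varAt ν Λ x (fun σ => f (restr hVΛ σ)) σ else 0))]
  have hbad : (∑ b : {x : ↥Λ // (x : Site d) ∉ V}, ∑ σ : ↥Λ → S, weight ν Λ σ *
      (if starConstr G Λ b.1 σ then varAt ν Λ b.1 (fun σ => f (restr hVΛ σ)) σ else 0)) = 0 := by
    refine Finset.sum_eq_zero fun b _ => Finset.sum_eq_zero fun σ _ => ?_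
    rw [varAt_restr_notMem hVΛ ν hsum f σ b.1 b.2, ite_self, mul_zero]
  rw [hbad, add_zero]
  have hidx : (∑ a : {x : ↥Λ // (x : Site d) ∈ V}, ∑ σ : ↥Λ → S, weight ν Λ σ *
        (if starConstr G Λ a.1 σ then varAt ν Λ a.1 (fun σ => f (restr hVΛ σ)) σ else 0))
      = ∑ y : ↥V, ∑ σ : ↥Λ → S, weight ν Λ σ *
        (if starConstr G Λ (incl hVΛ y) σ then
          varAt ν Λ (incl hVΛ y) (fun σ => f (restr hVΛ σ)) σ else 0) :=
    Fintype.sum_equiv (subEquiv hVΛ) _ _ (fun a => rfl)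
  rw [hidx]
  refine Finset.sum_le_sum fun y _ => ?_
  rw [← sum_restr hVΛ ν hsum (fun τ => if starConstr G V y τ then varAt ν V y f τ else 0)]
  refine Finset.sum_le_sum fun σ _ => ?_
  refine mul_le_mul_of_nonneg_left ?_ (weight_pos ν hν σ).le
  by_cases hc : starConstr G Λ (incl hVΛ y) σ
  · rw [if_pos hc, if_pos (starConstr_restr hVΛ G y σ hc)]
    exact le_of_eq (varAt_restr_incl hVΛ ν f σ y)
  · rw [if_neg hc]
    by_cases hc' : starConstr G V y (restr hVΛ σ)
    · rw [if_pos hc']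
      exact varAt_nonneg ν hν hsum y f (restr hVΛ σ)
    · rw [if_neg hc']

end Aux

/-- Monotonicity of the spectral gap of the *-general model:
if `V ⊆ Λ` then `gap(ℒ_Λ) ≤ gap(ℒ_V)`. -/
theorem starGap_mono {d : ℕ} {S : Type} [Fintype S]
    (ν : S → ℝ) (hν : ∀ s, 0 < ν s) (hsum : ∑ s : S, ν s = 1)
    (G : Set S) (V Λ : Finset (Site d)) (hVΛ : V ⊆ Λ) :
    starGap ν G Λ ≤ starGap ν G V := by
  classical
  have hSne : Nonempty S := by
    rcases isEmpty_or_nonempty S with h | h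
    · exact absurd hsum (by simp)
    · exact h
  rw [starGap, starGap]
  refine le_iInf fun fp => ?_
  obtain ⟨f, hf⟩ := fp
  set f' : (↥Λ → S) → ℝ := fun σ => f (restr hVΛ σ) with hf'
  have hne : ∃ σ σ', f' σ ≠ f' σ' := by
    obtain ⟨τ₀, τ₁, h01⟩ := hf
    have ρ : {x : ↥Λ // (x : Site d) ∉ V} → S := fun _ => Classical.arbitrary S
    refine ⟨(cfgEquiv hVΛ).symm (τ₀, ρ), (cfgEquiv hVΛ).symm (τ₁, ρ), ?_⟩
    simpa only [hf', restr_cfgEquiv_symm] using h01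
  refine le_trans (iInf_le _ ⟨f', hne⟩) ?_
  show ENNReal.ofReal (starDirichlet ν G Λ f') / ENNReal.ofReal (varTot ν Λ f')
      ≤ ENNReal.ofReal (starDirichlet ν G V f) / ENNReal.ofReal (varTot ν V f)
  rw [hf', varTot_restr hVΛ ν hsum f]
  exact ENNReal.div_le_div_right
    (ENNReal.ofReal_le_ofReal (starDirichlet_restr_le hVΛ ν hν hsum G f)) _

end KCSM
end

section
/- Let (S,ν) be a finite probability space with ν(s) > 0 for all s, let B₁ and B₂ be disjoint nonempty finite sets, Λ = B₁ ∪ B₂, and let μ be the product measure ν^{⊗Λ} on S^Λ. Let c₁ : S^Λ → {0,1} be a function depending only on the coordinates in B₂, and set ε = μ(c₁ = 0). For f : S^Λ → ℝ let Var_{B₁}(f) denote the conditional variance of f obtained by resampling the coordinates in B₁ from ν^{⊗B₁} with the coordinates in B₂ held fixed (a function of the B₂-coordinates), and similarly Var_{B₂}(f). Then for every f : S^Λ → ℝ, (1 − √ε)·Var_μ(f) ≤ μ( c₁·Var_{B₁}(f) ) + μ( Var_{B₂}(f) ); equivalently, the spectral gap of the constrained block dynamics with generator ℒ_block f = c₁(π₂f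 − f) + (π₁f − f), where π₁f = E_μ[f | coordinates in B₁] and π₂f = E_μ[f | coordinates in B₂], is at least 1 − √ε. -/
namespace KCSM

variable {S B₁ B₂ : Type}

/-- Replace the `B₁`-coordinates of `ω` by `σ₁`. -/
def patch₁ (σ₁ : B₁ → S) (ω : B₁ ⊕ B₂ → S) : B₁ ⊕ B₂ → S :=
  Sum.elim σ₁ (fun b => ω (Sum.inr b))

/-- Replace the `B₂`-coordinates of `ω` by `σ₂`. -/
def patch₂ (σ₂ : B₂ → S) (ω : B₁ ⊕ B₂ → S) : B₁ ⊕ B₂ → S :=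
  Sum.elim (fun b => ω (Sum.inl b)) σ₂

/-- Mean under the product measure `ν^{⊗(B₁⊔B₂)}`. -/
def blockMean [Fintype S] [Fintype B₁] [Fintype B₂] [DecidableEq B₁] [DecidableEq B₂] (ν : S → ℝ)
    (f : (B₁ ⊕ B₂ → S) → ℝ) : ℝ :=
  ∑ ω : B₁ ⊕ B₂ → S, (∏ x : B₁ ⊕ B₂, ν (ω x)) * f ω

/-- Variance under the product measure `ν^{⊗(B₁⊔B₂)}`. -/
def blockVar [Fintype S] [Fintype B₁] [Fintype B₂] [DecidableEq B₁] [DecidableEq B₂] (ν : S → ℝ)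
    (f : (B₁ ⊕ B₂ → S) → ℝ) : ℝ :=
  blockMean ν (fun ω => f ω ^ 2) - (blockMean ν f) ^ 2

/-- The conditional variance `Var_{B₁}(f)(ω)`: resample the `B₁`-coordinates from
`ν^{⊗B₁}`, keeping the `B₂`-coordinates of `ω` fixed. -/
def varB₁ [Fintype S] [Fintype B₁] [DecidableEq B₁] (ν : S → ℝ)
    (f : (B₁ ⊕ B₂ → S) → ℝ) (ω : B₁ ⊕ B₂ → S) : ℝ :=
  (∑ σ₁ : B₁ → S, (∏ b : B₁, ν (σ₁ b)) * f (patch₁ σ₁ ω) ^ 2) -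
    (∑ σ₁ : B₁ → S, (∏ b : B₁, ν (σ₁ b)) * f (patch₁ σ₁ ω)) ^ 2

/-- The conditional variance `Var_{B₂}(f)(ω)`: resample the `B₂`-coordinates from
`ν^{⊗B₂}`, keeping the `B₁`-coordinates of `ω` fixed. -/
def varB₂ [Fintype S] [Fintype B₂] [DecidableEq B₂] (ν : S → ℝ)
    (f : (B₁ ⊕ B₂ → S) → ℝ) (ω : B₁ ⊕ B₂ → S) : ℝ :=
  (∑ σ₂ : B₂ → S, (∏ b : B₂, ν (σ₂ b)) * f (patch₂ σ₂ ω) ^ 2) -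
    (∑ σ₂ : B₂ → S, (∏ b : B₂, ν (σ₂ b)) * f (patch₂ σ₂ ω)) ^ 2

open Finset

variable {ι : Type} [Fintype ι]

lemma sum_w_mul (w : ι → ℝ) (hw : ∑ i, w i = 1) (m : ℝ) : ∑ i, w i * m = m := by
  rw [← Finset.sum_mul, hw, one_mul]

lemma var_shift' (w x : ι → ℝ) (hw : ∑ i, w i = 1) (m : ℝ) :
    ∑ i, w i * (x i - m) ^ 2 =
      (∑ i, w i * x i ^ 2) - 2 * m * (∑ i, w i * x i) + m ^ 2 := by
  have h : ∀ i ∈ Finset.univ (α := ι),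
      w i * (x i - m) ^ 2 = w i * x i ^ 2 - (2 * m) * (w i * x i) + m ^ 2 * w i := by
    intros; ring
  rw [Finset.sum_congr rfl h, Finset.sum_add_distrib, Finset.sum_sub_distrib,
    ← Finset.mul_sum, ← Finset.mul_sum, hw, mul_one]

lemma sum_w_sub (w x : ι → ℝ) (hw : ∑ i, w i = 1) (m : ℝ) :
    ∑ i, w i * (x i - m) = (∑ i, w i * x i) - m := by
  have h : ∀ i ∈ Finset.univ (α := ι),
      w i * (x i - m) = w i * x i - m * w i := by intros; ring
  rw [Finset.sum_congr rfl h, Finset.sum_sub_distrib, ← Finset.mul_sum, hw, mul_one]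

lemma var_shift (w x : ι → ℝ) (hw : ∑ i, w i = 1) (m : ℝ) :
    (∑ i, w i * (x i - m) ^ 2) - (∑ i, w i * (x i - m)) ^ 2 =
      (∑ i, w i * x i ^ 2) - (∑ i, w i * x i) ^ 2 := by
  rw [var_shift' w x hw m, sum_w_sub w x hw m]; ring

lemma var_rep (w x : ι → ℝ) (hw : ∑ i, w i = 1) :
    (∑ i, w i * x i ^ 2) - (∑ i, w i * x i) ^ 2 =
      ∑ i, w i * (x i - ∑ i', w i' * x i') ^ 2 := by
  rw [var_shift' w x hw]; ring

lemma var_nonneg (w x : ι → ℝ) (hw0 : ∀ i, 0 ≤ w i) (hw : ∑ i, w i = 1) :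
    0 ≤ (∑ i, w i * x i ^ 2) - (∑ i, w i * x i) ^ 2 := by
  rw [var_rep w x hw]
  exact Finset.sum_nonneg fun i _ => mul_nonneg (hw0 i) (sq_nonneg _)

lemma weighted_cs_one (w x : ι → ℝ) (hw0 : ∀ i, 0 ≤ w i) :
    (∑ i, w i * x i) ^ 2 ≤ (∑ i, w i) * ∑ i, w i * x i ^ 2 := by
  have h := Finset.sum_mul_sq_le_sq_mul_sq Finset.univ
    (fun i => Real.sqrt (w i)) (fun i => Real.sqrt (w i) * x i)
  have e1 : ∀ i ∈ Finset.univ (α := ι),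
      Real.sqrt (w i) * (Real.sqrt (w i) * x i) = w i * x i := by
    intro i _; rw [← mul_assoc, Real.mul_self_sqrt (hw0 i)]
  have e2 : ∀ i ∈ Finset.univ (α := ι), (Real.sqrt (w i)) ^ 2 = w i := fun i _ =>
    Real.sq_sqrt (hw0 i)
  have e3 : ∀ i ∈ Finset.univ (α := ι),
      (Real.sqrt (w i) * x i) ^ 2 = w i * x i ^ 2 := by
    intro i _; rw [mul_pow, Real.sq_sqrt (hw0 i)]
  rwa [Finset.sum_congr rfl e1, Finset.sum_congr rfl e2, Finset.sum_congr rfl e3] at h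

lemma weighted_cs (w p q : ι → ℝ) (hw0 : ∀ i, 0 ≤ w i) :
    (∑ i, w i * (p i * q i)) ≤
      Real.sqrt (∑ i, w i * p i ^ 2) * Real.sqrt (∑ i, w i * q i ^ 2) := by
  have h := Finset.sum_mul_sq_le_sq_mul_sq Finset.univ
    (fun i => Real.sqrt (w i) * p i) (fun i => Real.sqrt (w i) * q i)
  have e1 : ∀ i ∈ Finset.univ (α := ι),
      (Real.sqrt (w i) * p i) * (Real.sqrt (w i) * q i) = w i * (p i * q i) := by
    intro i _; rw [mul_mul_mul_comm, Real.mul_self_sqrt (hw0 i)]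
  have e2 : ∀ i ∈ Finset.univ (α := ι),
      (Real.sqrt (w i) * p i) ^ 2 = w i * p i ^ 2 := by
    intro i _; rw [mul_pow, Real.sq_sqrt (hw0 i)]
  have e3 : ∀ i ∈ Finset.univ (α := ι),
      (Real.sqrt (w i) * q i) ^ 2 = w i * q i ^ 2 := by
    intro i _; rw [mul_pow, Real.sq_sqrt (hw0 i)]
  rw [Finset.sum_congr rfl e1, Finset.sum_congr rfl e2, Finset.sum_congr rfl e3] at h
  have hp0 : 0 ≤ ∑ i, w i * p i ^ 2 :=
    Finset.sum_nonneg fun i _ => mul_nonneg (hw0 i) (sq_nonneg _)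
  calc (∑ i, w i * (p i * q i)) ≤ Real.sqrt ((∑ i, w i * (p i * q i)) ^ 2) := by
        rw [Real.sqrt_sq_eq_abs]; exact le_abs_self _
    _ ≤ Real.sqrt ((∑ i, w i * p i ^ 2) * ∑ i, w i * q i ^ 2) := Real.sqrt_le_sqrt h
    _ = _ := Real.sqrt_mul hp0 _

lemma scalar_end (t P Q A B Sp Sq H : ℝ) (ht0 : 0 ≤ t) (ht1 : t ≤ 1)
    (hP0 : 0 ≤ P) (hQ0 : 0 ≤ Q) (hPA : P ≤ A) (hQB : Q ≤ B)
    (hSp : Sp ≤ (1 - t ^ 2) * P) (hSq : Sq ≤ t ^ 2 * Q)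
    (hH : H ≤ Sp + Sq + 2 * Real.sqrt Sp * Real.sqrt Sq) :
    H ≤ P + t * (A + B) := by
  have h1t : 0 ≤ (1 - t ^ 2) * P := mul_nonneg (by nlinarith) hP0
  have h2t : 0 ≤ t ^ 2 * Q := mul_nonneg (sq_nonneg t) hQ0
  have hx0 : 0 ≤ t * (1 + t) * P := mul_nonneg (mul_nonneg ht0 (by linarith)) hP0
  have hy0 : 0 ≤ t * (1 - t) * Q := mul_nonneg (mul_nonneg ht0 (by linarith)) hQ0
  set r := Real.sqrt ((1 - t ^ 2) * P) with hrdef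
  set s := Real.sqrt (t ^ 2 * Q) with hsdef
  have h1 : Real.sqrt Sp ≤ r := Real.sqrt_le_sqrt hSp
  have h2 : Real.sqrt Sq ≤ s := Real.sqrt_le_sqrt hSq
  have hr0 : 0 ≤ r := Real.sqrt_nonneg _
  have hs0 : 0 ≤ s := Real.sqrt_nonneg _
  have hr2 : r ^ 2 = (1 - t ^ 2) * P := Real.sq_sqrt h1t
  have hs2 : s ^ 2 = t ^ 2 * Q := Real.sq_sqrt h2t
  have hrs : r * s = Real.sqrt (t * (1 + t) * P) * Real.sqrt (t * (1 - t) * Q) := by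
    rw [← Real.sqrt_mul h1t, ← Real.sqrt_mul hx0]
    congr 1; ring
  have key : 2 * (Real.sqrt (t * (1 + t) * P) * Real.sqrt (t * (1 - t) * Q)) ≤
      t * (1 + t) * P + t * (1 - t) * Q := by
    nlinarith [two_mul_le_add_sq (Real.sqrt (t * (1 + t) * P)) (Real.sqrt (t * (1 - t) * Q)),
      Real.sq_sqrt hx0, Real.sq_sqrt hy0]
  have hm : Real.sqrt Sp * Real.sqrt Sq ≤ r * s :=
    mul_le_mul h1 h2 (Real.sqrt_nonneg _) hr0
  have htP : t * P ≤ t * A := mul_le_mul_of_nonneg_left hPA ht0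
  have htQ : t * Q ≤ t * B := mul_le_mul_of_nonneg_left hQB ht0
  nlinarith [hH, hSp, hSq, hm, hrs, key, htP, htQ]
set_option maxHeartbeats 2000000 in
open Finset in
lemma core {ι₁ ι₂ : Type} [Fintype ι₁] [Fintype ι₂]
    (w₁ : ι₁ → ℝ) (w₂ : ι₂ → ℝ)
    (hw₁0 : ∀ i, 0 ≤ w₁ i) (hw₂0 : ∀ j, 0 ≤ w₂ j)
    (hw₁ : ∑ i, w₁ i = 1) (hw₂ : ∑ j, w₂ j = 1)
    (c : ι₂ → ℝ) (hc : ∀ j, c j = 0 ∨ c j = 1)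
    (F : ι₁ → ι₂ → ℝ)
    (hF : ∑ i, ∑ j, (w₁ i * w₂ j) * F i j = 0)
    (ε : ℝ) (hε : ε = ∑ j, w₂ j * (1 - c j)) :
    (1 - Real.sqrt ε) * (∑ i, ∑ j, (w₁ i * w₂ j) * F i j ^ 2) ≤
      (∑ j, (w₂ j * c j) * ((∑ i, w₁ i * F i j ^ 2) - (∑ i, w₁ i * F i j) ^ 2)) +
      (∑ i, w₁ i * ((∑ j, w₂ j * F i j ^ 2) - (∑ j, w₂ j * F i j) ^ 2)) := by
  have hc0 : ∀ j, 0 ≤ c j := fun j => by rcases hc j with h | h <;> simp [h]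
  have hc1 : ∀ j, c j ≤ 1 := fun j => by rcases hc j with h | h <;> simp [h]
  have hwc0 : ∀ j, 0 ≤ w₂ j * c j := fun j => mul_nonneg (hw₂0 j) (hc0 j)
  have hwc0' : ∀ j, 0 ≤ w₂ j * (1 - c j) :=
    fun j => mul_nonneg (hw₂0 j) (by linarith [hc1 j])
  have hε0 : 0 ≤ ε := by
    rw [hε]; exact Finset.sum_nonneg fun j _ => hwc0' j
  have hε1 : ε ≤ 1 := by
    rw [hε, ← hw₂]
    exact Finset.sum_le_sum fun j _ => by nlinarith [hw₂0 j, hc0 j]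
  have hwc : ∑ j, w₂ j * c j = 1 - ε := by
    have h : ∀ j ∈ Finset.univ (α := ι₂),
        w₂ j * c j = w₂ j - w₂ j * (1 - c j) := by intros; ring
    rw [Finset.sum_congr rfl h, Finset.sum_sub_distrib, hw₂, ← hε]
  have hwc' : ∑ j, w₂ j * (1 - c j) = ε := hε.symm
  -- conditional variance over i, pointwise in j
  have hVg : ∀ j, (∑ i, w₁ i * F i j ^ 2) - (∑ i, w₁ i * F i j) ^ 2
      = ∑ i, w₁ i * (F i j - ∑ i', w₁ i' * F i' j) ^ 2 :=
    fun j => var_rep w₁ (fun i => F i j) hw₁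
  set A := ∑ j, (w₂ j * c j) * (∑ i, w₁ i * F i j ^ 2) with hAdef
  set a := ∑ j, (w₂ j * c j) * (∑ i, w₁ i * F i j) ^ 2 with hadef
  set B := ∑ j, (w₂ j * (1 - c j)) * (∑ i, w₁ i * F i j ^ 2) with hBdef
  set b := ∑ j, (w₂ j * (1 - c j)) * (∑ i, w₁ i * F i j) ^ 2 with hbdef
  set H := ∑ i, w₁ i * (∑ j, w₂ j * F i j) ^ 2 with hHdef
  set Sp := ∑ i, w₁ i * (∑ j, (w₂ j * c j) * (F i j - ∑ i', w₁ i' * F i' j)) ^ 2 with hSpdef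
  set Sq := ∑ i, w₁ i * (∑ j, (w₂ j * (1 - c j)) * (F i j - ∑ i', w₁ i' * F i' j)) ^ 2
    with hSqdef
  -- first RHS term
  have hR1 : (∑ j, (w₂ j * c j) * ((∑ i, w₁ i * F i j ^ 2) - (∑ i, w₁ i * F i j) ^ 2))
      = A - a := by
    rw [hAdef, hadef, ← Finset.sum_sub_distrib]
    exact Finset.sum_congr rfl fun j _ => by ring
  -- swapping lemmas
  have hswap : ∑ i, w₁ i * (∑ j, w₂ j * F i j ^ 2) = ∑ j, w₂ j * (∑ i, w₁ i * F i j ^ 2) := by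
    simp_rw [Finset.mul_sum]
    rw [Finset.sum_comm]
    exact Finset.sum_congr rfl fun j _ => Finset.sum_congr rfl fun i _ => by ring
  have hEsplit : ∑ j, w₂ j * (∑ i, w₁ i * F i j ^ 2) = A + B := by
    rw [hAdef, hBdef, ← Finset.sum_add_distrib]
    exact Finset.sum_congr rfl fun j _ => by ring
  have hLHS : ∑ i, ∑ j, (w₁ i * w₂ j) * F i j ^ 2 = A + B := by
    rw [← hEsplit, ← hswap]
    exact Finset.sum_congr rfl fun i _ => by
      rw [Finset.mul_sum]; exact Finset.sum_congr rfl fun j _ => by ring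
  -- second RHS term
  have hR2 : (∑ i, w₁ i * ((∑ j, w₂ j * F i j ^ 2) - (∑ j, w₂ j * F i j) ^ 2))
      = (A + B) - H := by
    calc ∑ i, w₁ i * ((∑ j, w₂ j * F i j ^ 2) - (∑ j, w₂ j * F i j) ^ 2)
        = (∑ i, w₁ i * (∑ j, w₂ j * F i j ^ 2)) - H := by
          rw [hHdef, ← Finset.sum_sub_distrib]
          exact Finset.sum_congr rfl fun i _ => by ring
      _ = (A + B) - H := by rw [hswap, hEsplit]
  -- the mean of g is zero
  have hg0 : ∑ j, w₂ j * (∑ i, w₁ i * F i j) = 0 := by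
    have h1 : ∑ j, w₂ j * (∑ i, w₁ i * F i j) = ∑ j, ∑ i, (w₁ i * w₂ j) * F i j :=
      Finset.sum_congr rfl fun j _ => by
        rw [Finset.mul_sum]; exact Finset.sum_congr rfl fun i _ => by ring
    rw [h1, Finset.sum_comm, hF]
  -- h = p + q
  have hpq : ∀ i, (∑ j, w₂ j * F i j) =
      (∑ j, (w₂ j * c j) * (F i j - ∑ i', w₁ i' * F i' j)) +
      (∑ j, (w₂ j * (1 - c j)) * (F i j - ∑ i', w₁ i' * F i' j)) := by
    intro i
    have e : (∑ j, (w₂ j * c j) * (F i j - ∑ i', w₁ i' * F i' j)) +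
        (∑ j, (w₂ j * (1 - c j)) * (F i j - ∑ i', w₁ i' * F i' j)) =
        ∑ j, (w₂ j * F i j - w₂ j * (∑ i', w₁ i' * F i' j)) := by
      rw [← Finset.sum_add_distrib]
      exact Finset.sum_congr rfl fun j _ => by ring
    rw [e, Finset.sum_sub_distrib, hg0, sub_zero]
  -- H ≤ Sp + Sq + 2√Sp√Sq
  have hX := weighted_cs w₁
    (fun i => ∑ j, (w₂ j * c j) * (F i j - ∑ i', w₁ i' * F i' j))
    (fun i => ∑ j, (w₂ j * (1 - c j)) * (F i j - ∑ i', w₁ i' * F i' j)) hw₁0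
  have hHle : H ≤ Sp + Sq + 2 * Real.sqrt Sp * Real.sqrt Sq := by
    have hexp : H = Sp + Sq + 2 * ∑ i, w₁ i *
        ((∑ j, (w₂ j * c j) * (F i j - ∑ i', w₁ i' * F i' j)) *
         (∑ j, (w₂ j * (1 - c j)) * (F i j - ∑ i', w₁ i' * F i' j))) := by
      rw [hHdef, hSpdef, hSqdef]
      have h : ∀ i ∈ Finset.univ (α := ι₁), w₁ i * (∑ j, w₂ j * F i j) ^ 2 =
          w₁ i * (∑ j, (w₂ j * c j) * (F i j - ∑ i', w₁ i' * F i' j)) ^ 2 +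
          w₁ i * (∑ j, (w₂ j * (1 - c j)) * (F i j - ∑ i', w₁ i' * F i' j)) ^ 2 +
          2 * (w₁ i * ((∑ j, (w₂ j * c j) * (F i j - ∑ i', w₁ i' * F i' j)) *
            (∑ j, (w₂ j * (1 - c j)) * (F i j - ∑ i', w₁ i' * F i' j)))) := by
        intro i _; rw [hpq i]; ring
      rw [Finset.sum_congr rfl h, Finset.sum_add_distrib, Finset.sum_add_distrib,
        ← Finset.mul_sum]
    rw [hexp]
    have := hX
    nlinarith [this]
  -- Sp ≤ (1-ε)(A-a)
  have hPrep : A - a = ∑ j, (w₂ j * c j) * (∑ i, w₁ i * (F i j - ∑ i', w₁ i' * F i' j) ^ 2) := by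
    rw [← hR1]
    exact Finset.sum_congr rfl fun j _ => by rw [hVg j]
  have hQrep : B - b = ∑ j, (w₂ j * (1 - c j)) *
      (∑ i, w₁ i * (F i j - ∑ i', w₁ i' * F i' j) ^ 2) := by
    rw [hBdef, hbdef, ← Finset.sum_sub_distrib]
    refine Finset.sum_congr rfl fun j _ => ?_
    rw [← mul_sub, hVg j]
  have hswapc : ∑ i, w₁ i * (∑ j, (w₂ j * c j) * (F i j - ∑ i', w₁ i' * F i' j) ^ 2)
      = ∑ j, (w₂ j * c j) * (∑ i, w₁ i * (F i j - ∑ i', w₁ i' * F i' j) ^ 2) := by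
    simp_rw [Finset.mul_sum]
    rw [Finset.sum_comm]
    exact Finset.sum_congr rfl fun j _ => Finset.sum_congr rfl fun i _ => by ring
  have hswapc' : ∑ i, w₁ i * (∑ j, (w₂ j * (1 - c j)) * (F i j - ∑ i', w₁ i' * F i' j) ^ 2)
      = ∑ j, (w₂ j * (1 - c j)) * (∑ i, w₁ i * (F i j - ∑ i', w₁ i' * F i' j) ^ 2) := by
    simp_rw [Finset.mul_sum]
    rw [Finset.sum_comm]
    exact Finset.sum_congr rfl fun j _ => Finset.sum_congr rfl fun i _ => by ring
  have hSple : Sp ≤ (1 - ε) * (A - a) := by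
    have step1 : Sp ≤ ∑ i, w₁ i *
        ((1 - ε) * (∑ j, (w₂ j * c j) * (F i j - ∑ i', w₁ i' * F i' j) ^ 2)) := by
      rw [hSpdef]
      refine Finset.sum_le_sum fun i _ => mul_le_mul_of_nonneg_left ?_ (hw₁0 i)
      have hcs := weighted_cs_one (fun j => w₂ j * c j)
        (fun j => F i j - ∑ i', w₁ i' * F i' j) hwc0
      rwa [hwc] at hcs
    calc Sp ≤ _ := step1
      _ = (1 - ε) * ∑ i, w₁ i * (∑ j, (w₂ j * c j) * (F i j - ∑ i', w₁ i' * F i' j) ^ 2) := by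
          rw [Finset.mul_sum]; exact Finset.sum_congr rfl fun i _ => by ring
      _ = (1 - ε) * (A - a) := by rw [hswapc, ← hPrep]
  have hSqle : Sq ≤ ε * (B - b) := by
    have step1 : Sq ≤ ∑ i, w₁ i *
        (ε * (∑ j, (w₂ j * (1 - c j)) * (F i j - ∑ i', w₁ i' * F i' j) ^ 2)) := by
      rw [hSqdef]
      refine Finset.sum_le_sum fun i _ => mul_le_mul_of_nonneg_left ?_ (hw₁0 i)
      have hcs := weighted_cs_one (fun j => w₂ j * (1 - c j))
        (fun j => F i j - ∑ i', w₁ i' * F i' j) hwc0'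
      rwa [hwc'] at hcs
    calc Sq ≤ _ := step1
      _ = ε * ∑ i, w₁ i * (∑ j, (w₂ j * (1 - c j)) * (F i j - ∑ i', w₁ i' * F i' j) ^ 2) := by
          rw [Finset.mul_sum]; exact Finset.sum_congr rfl fun i _ => by ring
      _ = ε * (B - b) := by rw [hswapc', ← hQrep]
  -- nonnegativity facts
  have ha0 : 0 ≤ a := Finset.sum_nonneg fun j _ => mul_nonneg (hwc0 j) (sq_nonneg _)
  have hb0 : 0 ≤ b := Finset.sum_nonneg fun j _ => mul_nonneg (hwc0' j) (sq_nonneg _)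
  have hP0 : 0 ≤ A - a := by
    rw [hPrep]
    exact Finset.sum_nonneg fun j _ => mul_nonneg (hwc0 j)
      (Finset.sum_nonneg fun i _ => mul_nonneg (hw₁0 i) (sq_nonneg _))
  have hQ0 : 0 ≤ B - b := by
    rw [hQrep]
    exact Finset.sum_nonneg fun j _ => mul_nonneg (hwc0' j)
      (Finset.sum_nonneg fun i _ => mul_nonneg (hw₁0 i) (sq_nonneg _))
  -- endgame
  have ht0 : 0 ≤ Real.sqrt ε := Real.sqrt_nonneg _
  have ht1 : Real.sqrt ε ≤ 1 := by rw [show (1:ℝ) = Real.sqrt 1 by simp]; exact Real.sqrt_le_sqrt hε1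
  have ht2 : Real.sqrt ε ^ 2 = ε := Real.sq_sqrt hε0
  have hfinal : H ≤ (A - a) + Real.sqrt ε * (A + B) := by
    refine scalar_end (Real.sqrt ε) (A - a) (B - b) A B Sp Sq H ht0 ht1 hP0 hQ0
      (by linarith) (by linarith) ?_ ?_ hHle
    · rw [ht2]; exact hSple
    · rw [ht2]; exact hSqle
  rw [hR1, hR2, hLHS]
  nlinarith [hfinal]
lemma dsum_shift {ι₁ ι₂ : Type} [Fintype ι₁] [Fintype ι₂] (w₁ : ι₁ → ℝ) (w₂ : ι₂ → ℝ)
    (hw₁ : ∑ i, w₁ i = 1) (hw₂ : ∑ j, w₂ j = 1) (φ : ι₁ → ι₂ → ℝ) (m : ℝ) :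
    ∑ i, ∑ j, (w₁ i * w₂ j) * (φ i j - m) = (∑ i, ∑ j, (w₁ i * w₂ j) * φ i j) - m := by
  have hW : ∑ p : ι₁ × ι₂, w₁ p.1 * w₂ p.2 = 1 := by
    rw [Fintype.sum_prod_type]
    simp_rw [← Finset.mul_sum, hw₂, mul_one]
    exact hw₁
  have h := sum_w_sub (fun p : ι₁ × ι₂ => w₁ p.1 * w₂ p.2) (fun p => φ p.1 p.2) hW m
  simpa [Fintype.sum_prod_type] using h

lemma dsum_shift_sq {ι₁ ι₂ : Type} [Fintype ι₁] [Fintype ι₂] (w₁ : ι₁ → ℝ) (w₂ : ι₂ → ℝ)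
    (hw₁ : ∑ i, w₁ i = 1) (hw₂ : ∑ j, w₂ j = 1) (φ : ι₁ → ι₂ → ℝ) (m : ℝ) :
    ∑ i, ∑ j, (w₁ i * w₂ j) * (φ i j - m) ^ 2 =
      (∑ i, ∑ j, (w₁ i * w₂ j) * φ i j ^ 2) - 2 * m * (∑ i, ∑ j, (w₁ i * w₂ j) * φ i j)
        + m ^ 2 := by
  have hW : ∑ p : ι₁ × ι₂, w₁ p.1 * w₂ p.2 = 1 := by
    rw [Fintype.sum_prod_type]
    simp_rw [← Finset.mul_sum, hw₂, mul_one]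
    exact hw₁
  have h := var_shift' (fun p : ι₁ × ι₂ => w₁ p.1 * w₂ p.2) (fun p => φ p.1 p.2) hW m
  simpa [Fintype.sum_prod_type] using h
set_option maxHeartbeats 2000000 in
/-- Poincaré inequality for the constrained two-block dynamics:
if the constraint `c₁` depends only on the `B₂`-coordinates and fails with
probability `ε`, then `(1 - √ε)·Var_μ(f) ≤ μ(c₁·Var_{B₁}(f)) + μ(Var_{B₂}(f))`,
i.e. the spectral gap of the constrained block dynamics is at least `1 - √ε`. -/
theorem block_dynamics_poincare
    {S B₁ B₂ : Type} [Fintype S] [Fintype B₁] [Fintype B₂] [DecidableEq B₁] [DecidableEq B₂]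
    [Nonempty B₁] [Nonempty B₂]
    (ν : S → ℝ) (hν : ∀ s, 0 < ν s) (hsum : ∑ s : S, ν s = 1)
    (c₁ : (B₁ ⊕ B₂ → S) → Bool)
    (hc₁ : ∀ ω ω' : B₁ ⊕ B₂ → S,
      (∀ b : B₂, ω (Sum.inr b) = ω' (Sum.inr b)) → c₁ ω = c₁ ω')
    (ε : ℝ) (hε : ε = blockMean ν (fun ω => if c₁ ω then 0 else 1))
    (f : (B₁ ⊕ B₂ → S) → ℝ) :
    (1 - Real.sqrt ε) * blockVar ν f ≤
      blockMean ν (fun ω => if c₁ ω then varB₁ ν f ω else 0) +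
        blockMean ν (fun ω => varB₂ ν f ω) := by
  classical
  have hS : Nonempty S := by
    rcases isEmpty_or_nonempty S with h | h
    · exfalso
      rw [Finset.univ_eq_empty, Finset.sum_empty] at hsum
      norm_num at hsum
    · exact h
  obtain ⟨s₀⟩ := hS
  have hw₁0 : ∀ σ : B₁ → S, 0 ≤ ∏ b, ν (σ b) :=
    fun σ => Finset.prod_nonneg fun b _ => (hν _).le
  have hw₂0 : ∀ σ : B₂ → S, 0 ≤ ∏ b, ν (σ b) :=
    fun σ => Finset.prod_nonneg fun b _ => (hν _).le
  have hw₁ : ∑ σ : B₁ → S, ∏ b, ν (σ b) = 1 := by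
    rw [← Fintype.piFinset_univ, Finset.sum_prod_piFinset]
    simp [hsum]
  have hw₂ : ∑ σ : B₂ → S, ∏ b, ν (σ b) = 1 := by
    rw [← Fintype.piFinset_univ, Finset.sum_prod_piFinset]
    simp [hsum]
  have hconv : ∀ G : (B₁ ⊕ B₂ → S) → ℝ, blockMean ν G =
      ∑ σ₁ : B₁ → S, ∑ σ₂ : B₂ → S,
        ((∏ b, ν (σ₁ b)) * ∏ b, ν (σ₂ b)) * G (Sum.elim σ₁ σ₂) := by
    intro G
    unfold blockMean
    rw [← Equiv.sum_comp (Equiv.sumArrowEquivProdArrow B₁ B₂ S).symm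
      (fun ω => (∏ x, ν (ω x)) * G ω), Fintype.sum_prod_type]
    refine Finset.sum_congr rfl fun σ₁ _ => Finset.sum_congr rfl fun σ₂ _ => ?_
    have he : (Equiv.sumArrowEquivProdArrow B₁ B₂ S).symm (σ₁, σ₂) = Sum.elim σ₁ σ₂ := rfl
    rw [he]
    congr 1
    exact Fintype.prod_sum_type _
  have hcelim : ∀ (σ₁ : B₁ → S) (σ₂ : B₂ → S),
      c₁ (Sum.elim σ₁ σ₂) = c₁ (Sum.elim (fun _ : B₁ => s₀) σ₂) :=
    fun σ₁ σ₂ => hc₁ _ _ fun b => rfl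
  set M := blockMean ν f with hM
  have hFsum : ∑ σ₁ : B₁ → S, ∑ σ₂ : B₂ → S,
      ((∏ b, ν (σ₁ b)) * ∏ b, ν (σ₂ b)) * (f (Sum.elim σ₁ σ₂) - M) = 0 := by
    rw [dsum_shift (fun σ₁ : B₁ → S => ∏ b, ν (σ₁ b)) (fun σ₂ : B₂ → S => ∏ b, ν (σ₂ b))
      hw₁ hw₂ (fun σ₁ σ₂ => f (Sum.elim σ₁ σ₂)) M, ← hconv f, ← hM, sub_self]
  have hεcore : ε = ∑ σ₂ : B₂ → S, (∏ b, ν (σ₂ b)) *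
      (1 - (if c₁ (Sum.elim (fun _ : B₁ => s₀) σ₂) then (1:ℝ) else 0)) := by
    rw [hε, hconv]
    have h1 : ∀ σ₁ ∈ Finset.univ (α := B₁ → S),
        (∑ σ₂ : B₂ → S, ((∏ b, ν (σ₁ b)) * ∏ b, ν (σ₂ b)) *
          (if c₁ (Sum.elim σ₁ σ₂) then (0:ℝ) else 1)) =
        (∏ b, ν (σ₁ b)) * ∑ σ₂ : B₂ → S, (∏ b, ν (σ₂ b)) *
          (1 - (if c₁ (Sum.elim (fun _ : B₁ => s₀) σ₂) then (1:ℝ) else 0)) := by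
      intro σ₁ _
      rw [Finset.mul_sum]
      refine Finset.sum_congr rfl fun σ₂ _ => ?_
      rw [hcelim σ₁ σ₂]
      cases h : c₁ (Sum.elim (fun _ : B₁ => s₀) σ₂) <;> simp [h] <;> ring
    rw [Finset.sum_congr rfl h1, ← Finset.sum_mul, hw₁, one_mul]
  have hkey := core (fun σ₁ : B₁ → S => ∏ b, ν (σ₁ b)) (fun σ₂ : B₂ → S => ∏ b, ν (σ₂ b))
    hw₁0 hw₂0 hw₁ hw₂
    (fun σ₂ => if c₁ (Sum.elim (fun _ : B₁ => s₀) σ₂) then (1:ℝ) else 0)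
    (fun σ₂ => by cases h : c₁ (Sum.elim (fun _ : B₁ => s₀) σ₂) <;> simp [h])
    (fun σ₁ σ₂ => f (Sum.elim σ₁ σ₂) - M) hFsum ε hεcore
  have e1 : blockVar ν f = ∑ σ₁ : B₁ → S, ∑ σ₂ : B₂ → S,
      ((∏ b, ν (σ₁ b)) * ∏ b, ν (σ₂ b)) * (f (Sum.elim σ₁ σ₂) - M) ^ 2 := by
    rw [dsum_shift_sq (fun σ₁ : B₁ → S => ∏ b, ν (σ₁ b)) (fun σ₂ : B₂ → S => ∏ b, ν (σ₂ b))
      hw₁ hw₂ (fun σ₁ σ₂ => f (Sum.elim σ₁ σ₂)) M, ← hconv f,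
      ← hconv (fun ω => f ω ^ 2), ← hM]
    unfold blockVar
    rw [← hM]
    ring
  have e2 : blockMean ν (fun ω => if c₁ ω then varB₁ ν f ω else 0) =
      ∑ σ₂ : B₂ → S, ((∏ b, ν (σ₂ b)) *
          (if c₁ (Sum.elim (fun _ : B₁ => s₀) σ₂) then (1:ℝ) else 0)) *
        ((∑ σ₁ : B₁ → S, (∏ b, ν (σ₁ b)) * (f (Sum.elim σ₁ σ₂) - M) ^ 2) -
         (∑ σ₁ : B₁ → S, (∏ b, ν (σ₁ b)) * (f (Sum.elim σ₁ σ₂) - M)) ^ 2) := by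
    rw [hconv]
    have h1 : ∀ σ₁ ∈ Finset.univ (α := B₁ → S),
        (∑ σ₂ : B₂ → S, ((∏ b, ν (σ₁ b)) * ∏ b, ν (σ₂ b)) *
          (if c₁ (Sum.elim σ₁ σ₂) then varB₁ ν f (Sum.elim σ₁ σ₂) else 0)) =
        (∏ b, ν (σ₁ b)) * ∑ σ₂ : B₂ → S, ((∏ b, ν (σ₂ b)) *
            (if c₁ (Sum.elim (fun _ : B₁ => s₀) σ₂) then (1:ℝ) else 0)) *
          ((∑ τ : B₁ → S, (∏ b, ν (τ b)) * (f (Sum.elim τ σ₂) - M) ^ 2) -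
           (∑ τ : B₁ → S, (∏ b, ν (τ b)) * (f (Sum.elim τ σ₂) - M)) ^ 2) := by
      intro σ₁ _
      rw [Finset.mul_sum]
      refine Finset.sum_congr rfl fun σ₂ _ => ?_
      have hv : varB₁ ν f (Sum.elim σ₁ σ₂) =
          (∑ τ : B₁ → S, (∏ b, ν (τ b)) * (f (Sum.elim τ σ₂) - M) ^ 2) -
          (∑ τ : B₁ → S, (∏ b, ν (τ b)) * (f (Sum.elim τ σ₂) - M)) ^ 2 := by
        have h0 : varB₁ ν f (Sum.elim σ₁ σ₂) =
            (∑ τ : B₁ → S, (∏ b, ν (τ b)) * f (Sum.elim τ σ₂) ^ 2) -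
            (∑ τ : B₁ → S, (∏ b, ν (τ b)) * f (Sum.elim τ σ₂)) ^ 2 := rfl
        rw [h0, ← var_shift (fun τ : B₁ → S => ∏ b, ν (τ b))
          (fun τ => f (Sum.elim τ σ₂)) hw₁ M]
      rw [hcelim σ₁ σ₂]
      cases h : c₁ (Sum.elim (fun _ : B₁ => s₀) σ₂) <;> simp [h, hv] <;> ring
    rw [Finset.sum_congr rfl h1, ← Finset.sum_mul, hw₁, one_mul]
  have e3 : blockMean ν (fun ω => varB₂ ν f ω) =
      ∑ σ₁ : B₁ → S, (∏ b, ν (σ₁ b)) *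
        ((∑ σ₂ : B₂ → S, (∏ b, ν (σ₂ b)) * (f (Sum.elim σ₁ σ₂) - M) ^ 2) -
         (∑ σ₂ : B₂ → S, (∏ b, ν (σ₂ b)) * (f (Sum.elim σ₁ σ₂) - M)) ^ 2) := by
    rw [hconv]
    refine Finset.sum_congr rfl fun σ₁ _ => ?_
    have hv : ∀ σ₂ : B₂ → S, varB₂ ν f (Sum.elim σ₁ σ₂) =
        (∑ τ : B₂ → S, (∏ b, ν (τ b)) * (f (Sum.elim σ₁ τ) - M) ^ 2) -
        (∑ τ : B₂ → S, (∏ b, ν (τ b)) * (f (Sum.elim σ₁ τ) - M)) ^ 2 := by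
      intro σ₂
      have h0 : varB₂ ν f (Sum.elim σ₁ σ₂) =
          (∑ τ : B₂ → S, (∏ b, ν (τ b)) * f (Sum.elim σ₁ τ) ^ 2) -
          (∑ τ : B₂ → S, (∏ b, ν (τ b)) * f (Sum.elim σ₁ τ)) ^ 2 := rfl
      rw [h0, ← var_shift (fun τ : B₂ → S => ∏ b, ν (τ b))
        (fun τ => f (Sum.elim σ₁ τ)) hw₂ M]
    have h2 : ∀ σ₂ ∈ Finset.univ (α := B₂ → S),
        ((∏ b, ν (σ₁ b)) * ∏ b, ν (σ₂ b)) * varB₂ ν f (Sum.elim σ₁ σ₂) =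
        (∏ b, ν (σ₂ b)) * ((∏ b, ν (σ₁ b)) *
          ((∑ τ : B₂ → S, (∏ b, ν (τ b)) * (f (Sum.elim σ₁ τ) - M) ^ 2) -
           (∑ τ : B₂ → S, (∏ b, ν (τ b)) * (f (Sum.elim σ₁ τ) - M)) ^ 2)) := by
      intro σ₂ _
      rw [hv σ₂]; ring
    rw [Finset.sum_congr rfl h2, ← Finset.sum_mul, hw₂, one_mul]
  rw [e1, e2, e3]
  exact hkey

end KCSM
end

section
/- Let (X, 𝔉, μ) be a probability space and A ∈ 𝔉 with μ(A) = p ∈ (0,1); set q = 1 − p. Then for every f ∈ L²(μ) with ∫ f² dμ = 1, one has ∫_A f² dμ − 2·Var_μ(f) ≤ p + pq/(1+p); moreover p + pq/(1+p) < 1. (This is the quadratic-form estimate sup spec(ℒ + λV) ≤ λ(p + pq/(1+p)) at λ = γ/2 for a generator with spectral gap γ and V = multiplication by the indicator of A, which yields exponential decay of the persistence function.) -/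
open MeasureTheory ProbabilityTheory

/-- Cauchy–Schwarz for integrals: `(∫ f)² ≤ ν(univ) · ∫ f²`. -/
private lemma sq_integral_le_measure_mul_integral_sq
    {X : Type*} [MeasurableSpace X] (ν : Measure X) [IsFiniteMeasure ν]
    (f : X → ℝ) (hf1 : Integrable f ν) (hf2 : Integrable (fun x => f x ^ 2) ν) :
    (∫ x, f x ∂ν) ^ 2 ≤ (ν Set.univ).toReal * ∫ x, f x ^ 2 ∂ν := by
  set c := (ν Set.univ).toReal with hcdef
  have hc : 0 ≤ c := ENNReal.toReal_nonneg
  rcases hc.eq_or_lt with h | h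
  · have hν : ν = 0 := by
      rw [← Measure.measure_univ_eq_zero]
      have hne : ν Set.univ ≠ ⊤ := measure_ne_top ν _
      have := h.symm
      rw [hcdef, ENNReal.toReal_eq_zero_iff] at this
      tauto
    simp [hν]
  · set m := ∫ x, f x ∂ν with hm
    have key : 0 ≤ ∫ x, (m / c - f x) ^ 2 ∂ν := integral_nonneg fun x => sq_nonneg _
    have expand : ∫ x, (m / c - f x) ^ 2 ∂ν
        = (m / c) ^ 2 * c + (-(2 * (m / c)) * m + ∫ x, f x ^ 2 ∂ν) := by
      have heq : ∀ x, (m / c - f x) ^ 2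
          = (m / c) ^ 2 + (-(2 * (m / c)) * f x + f x ^ 2) := by intro x; ring
      have h2 : Integrable (fun x => -(2 * (m / c)) * f x + f x ^ 2) ν :=
        (hf1.const_mul _).add hf2
      calc ∫ x, (m / c - f x) ^ 2 ∂ν
          = ∫ x, ((m / c) ^ 2 + (-(2 * (m / c)) * f x + f x ^ 2)) ∂ν := by simp_rw [heq]
        _ = (∫ _x, (m / c) ^ 2 ∂ν) + ∫ x, (-(2 * (m / c)) * f x + f x ^ 2) ∂ν :=
            integral_add (integrable_const _) h2
        _ = (m / c) ^ 2 * c + (-(2 * (m / c)) * m + ∫ x, f x ^ 2 ∂ν) := by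
            rw [integral_add (hf1.const_mul _) hf2, integral_const_mul, integral_const]
            simp [smul_eq_mul, mul_comm, hcdef, hm, measureReal_def]
    rw [expand] at key
    have hc' : c ≠ 0 := ne_of_gt h
    have key2 : 0 ≤ -(m ^ 2) / c + ∫ x, f x ^ 2 ∂ν := by
      have : (m / c) ^ 2 * c + (-(2 * (m / c)) * m + ∫ x, f x ^ 2 ∂ν)
          = -(m ^ 2) / c + ∫ x, f x ^ 2 ∂ν := by field_simp; ring
      linarith [this ▸ key]
    rw [neg_div] at key2
    have hle : m ^ 2 / c ≤ ∫ x, f x ^ 2 ∂ν := by linarith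
    calc m ^ 2 = (m ^ 2 / c) * c := by field_simp
    _ ≤ (∫ x, f x ^ 2 ∂ν) * c := mul_le_mul_of_nonneg_right hle hc
    _ = c * ∫ x, f x ^ 2 ∂ν := mul_comm _ _

/-- The purely algebraic heart of the estimate. -/
private lemma key_algebra (p v a b : ℝ) (hp0 : 0 < p) (hp1 : p < 1) (hv : 0 ≤ v)
    (ha : a ^ 2 ≤ p * (1 - v)) (hb : b ^ 2 ≤ (1 - p) * v) :
    (1 - v) - 2 * (1 - (a + b) ^ 2) ≤ 2 * p / (1 + p) := by
  have hp1' : (0 : ℝ) < 1 + p := by linarith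
  rw [le_div_iff₀ hp1']
  have hST : (0 : ℝ) < 2 * p * (1 + p) * ((1 - p) * (1 + 2 * p)) :=
    mul_pos (mul_pos (by linarith) (by linarith)) (mul_pos (by linarith) (by linarith))
  rw [← mul_le_mul_iff_right₀ hST]
  have A1 : (0 : ℝ) ≤ 2 * (1 + p) := by linarith
  have A2 : (0 : ℝ) ≤ 2 * p * (1 + p) + (1 - p) * (1 + 2 * p) := by nlinarith
  have A3 : (0 : ℝ) ≤ (1 - p) * (1 + 2 * p) := by nlinarith
  have A4 : (0 : ℝ) ≤ 2 * p * (1 + p) := by nlinarith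
  have H1 : (0 : ℝ) ≤ 2 * (1 + p) *
      ((1 - p) * (1 + 2 * p) * a - 2 * p * (1 + p) * b) ^ 2 :=
    mul_nonneg A1 (sq_nonneg _)
  have H2 : (0 : ℝ) ≤ 2 * (1 + p) * (2 * p * (1 + p) + (1 - p) * (1 + 2 * p)) *
      ((1 - p) * (1 + 2 * p)) * (p * (1 - v) - a ^ 2) :=
    mul_nonneg (mul_nonneg (mul_nonneg A1 A2) A3) (by linarith)
  have H3 : (0 : ℝ) ≤ 2 * (1 + p) * (2 * p * (1 + p) + (1 - p) * (1 + 2 * p)) *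
      (2 * p * (1 + p)) * ((1 - p) * v - b ^ 2) :=
    mul_nonneg (mul_nonneg (mul_nonneg A1 A2) A4) (by linarith)
  have H4 : (0 : ℝ) ≤ 4 * p ^ 3 * (1 - p) * (1 + p) * v :=
    mul_nonneg (mul_nonneg (mul_nonneg (by positivity) (by linarith)) (by linarith)) hv
  nlinarith [H1, H2, H3, H4]

/-- The quadratic-form estimate behind the exponential decay of the
persistence function: if `μ(A) = p ∈ (0,1)` and `q = 1 - p`, then for every
`f ∈ L²(μ)` with `∫ f² dμ = 1` one has
`∫_A f² dμ - 2·Var_μ(f) ≤ p + pq/(1+p)`, and `p + pq/(1+p) < 1`. -/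
theorem persistence_quadratic_form_estimate
    {X : Type*} [MeasurableSpace X] (μ : Measure X) [IsProbabilityMeasure μ]
    (A : Set X) (hA : MeasurableSet A) (p q : ℝ)
    (hp0 : 0 < p) (hp1 : p < 1) (hpA : μ A = ENNReal.ofReal p) (hq : q = 1 - p) :
    (∀ f : X → ℝ, MemLp f 2 μ → ∫ x, f x ^ 2 ∂μ = 1 →
      ∫ x in A, f x ^ 2 ∂μ - 2 * variance f μ ≤ p + p * q / (1 + p)) ∧
    p + p * q / (1 + p) < 1 := by
  have hp1' : (0 : ℝ) < 1 + p := by linarith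
  have hbound : p + p * q / (1 + p) = 2 * p / (1 + p) := by
    rw [hq]; field_simp; ring
  constructor
  · intro f hf hf1
    have hfi : Integrable f μ := hf.integrable one_le_two
    have hf2i : Integrable (fun x => f x ^ 2) μ := hf.integrable_sq
    -- measures of A and Aᶜ
    have hμA : ((μ.restrict A) Set.univ).toReal = p := by
      rw [Measure.restrict_apply_univ, hpA, ENNReal.toReal_ofReal hp0.le]
    have hμAc : ((μ.restrict Aᶜ) Set.univ).toReal = 1 - p := by
      rw [Measure.restrict_apply_univ, prob_compl_eq_one_sub hA, hpA,
        ← ENNReal.ofReal_one, ← ENNReal.ofReal_sub _ hp0.le,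
        ENNReal.toReal_ofReal (by linarith)]
    -- splitting the integrals
    have hsplit2 : ∫ x in A, f x ^ 2 ∂μ + ∫ x in Aᶜ, f x ^ 2 ∂μ = 1 := by
      rw [integral_add_compl hA hf2i, hf1]
    have hsplit1 : ∫ x in A, f x ∂μ + ∫ x in Aᶜ, f x ∂μ = ∫ x, f x ∂μ :=
      integral_add_compl hA hfi
    set a := ∫ x in A, f x ∂μ with hadef
    set b := ∫ x in Aᶜ, f x ∂μ with hbdef
    set v := ∫ x in Aᶜ, f x ^ 2 ∂μ with hvdef
    have hv : 0 ≤ v := integral_nonneg fun x => sq_nonneg _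
    -- Cauchy–Schwarz on A and Aᶜ
    have ha : a ^ 2 ≤ p * (1 - v) := by
      have := sq_integral_le_measure_mul_integral_sq (μ.restrict A) f
        hfi.restrict hf2i.restrict
      rw [hμA] at this
      have hu : ∫ x in A, f x ^ 2 ∂μ = 1 - v := by linarith
      rw [hu] at this
      exact this
    have hb : b ^ 2 ≤ (1 - p) * v := by
      have := sq_integral_le_measure_mul_integral_sq (μ.restrict Aᶜ) f
        hfi.restrict hf2i.restrict
      rw [hμAc] at this
      exact this
    -- variance formula
    have hvar : variance f μ = 1 - (a + b) ^ 2 := by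
      rw [variance_eq_sub hf]
      simp only [Pi.pow_apply]
      rw [hf1, hsplit1]
    have hu : ∫ x in A, f x ^ 2 ∂μ = 1 - v := by linarith
    rw [hu, hvar, hbound]
    exact key_algebra p v a b hp0 hp1 hv ha hb
  · rw [hbound, div_lt_one hp1']
    linarith
end
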